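/- In the antisymmetric model, the tadpole contraction of three antisymmetric projectors is proportional to the projector itself: ∑_{c1,...,c6} A_{a1a2a3,c1c2c3} A_{c3c4c5,c5c2c6} A_{c6c4c1,b1b2b3} = ((N-2)/6)·A_{a1a2a3,b1b2b3} (equivalently f_1^A = (N-2)/(2 N^{3/2}) after normalization by 3/N^{3/2}). -/

import Mathlib

open Finset

/-- The antisymmetric projector on rank-3 tensors over `ℝ^N`, with six explicit indices. -/
noncomputable def antisymProj6 (N : ℕ) (a1 a2 a3 b1 b2 b3 : Fin N) : ℝ :=
  (1 / 6) * ∑ σ : Equiv.Perm (Fin 3),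
    ((Equiv.Perm.sign σ : ℤ) : ℝ) *
      ∏ i : Fin 3, if (![a1, a2, a3]) i = (![b1, b2, b3]) (σ i) then (1 : ℝ) else 0

section AuxTadpole
open Equiv

lemma neg_ite_zero (c : Prop) [Decidable c] (x : ℝ) :
    (if c then -x else 0) = -(if c then x else 0) := by split <;> simp

def d {N : ℕ} (x y : Fin N) : ℝ := if x = y then 1 else 0

lemma proj_explicit (N : ℕ) (a1 a2 a3 b1 b2 b3 : Fin N) :
    antisymProj6 N a1 a2 a3 b1 b2 b3 = (1/6) *
      (d a1 b1 * d a2 b2 * d a3 b3 - d a1 b2 * d a2 b1 * d a3 b3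
       - d a1 b3 * d a2 b2 * d a3 b1 - d a1 b1 * d a2 b3 * d a3 b2
       + d a1 b2 * d a2 b3 * d a3 b1 + d a1 b3 * d a2 b1 * d a3 b2) := by
  rw [antisymProj6, show (univ : Finset (Perm (Fin 3))) =
    {1, swap 0 1, swap 0 2, swap 1 2, swap 0 1 * swap 1 2, swap 0 2 * swap 1 2} from by decide]
  rw [Finset.sum_insert (by decide), Finset.sum_insert (by decide), Finset.sum_insert (by decide),
    Finset.sum_insert (by decide), Finset.sum_insert (by decide), Finset.sum_singleton]
  simp only [Fin.prod_univ_three, d]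
  norm_num [Equiv.swap_apply_def, Perm.mul_apply, Matrix.cons_val_zero, Matrix.cons_val_one,
    Matrix.head_cons, Matrix.cons_val_two, Matrix.tail_cons, Perm.sign_swap, Fin.ext_iff, neg_ite_zero]
  ring

-- delta calculus
lemma d_comm {N : ℕ} (x y : Fin N) : d x y = d y x := by simp [d, eq_comm]
lemma d_self {N : ℕ} (x : Fin N) : d x x = 1 := by simp [d]
lemma sum_d_mul {N : ℕ} (a : Fin N) (f : Fin N → ℝ) :
    ∑ x : Fin N, d a x * f x = f a := by simp [d]
lemma sum_mul_d {N : ℕ} (a : Fin N) (f : Fin N → ℝ) :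
    ∑ x : Fin N, f x * d a x = f a := by simp [d]
lemma sum_d_self {N : ℕ} : ∑ x : Fin N, d x x = (N : ℝ) := by simp [d_self]

lemma sum_if_const {N : ℕ} (c : Prop) [Decidable c] (f g : Fin N → ℝ) :
    (∑ x : Fin N, if c then f x else g x) = if c then ∑ x : Fin N, f x else ∑ x : Fin N, g x := by
  split <;> rfl

lemma middle (N : ℕ) (u v w z : Fin N) :
    ∑ x : Fin N, antisymProj6 N u v x x w z
      = (((N:ℝ) - 2)/6) * (d u w * d v z - d u z * d v w) := by
  simp only [proj_explicit, d]
  simp only [ite_mul, mul_ite, zero_mul, mul_zero, one_mul, mul_one]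
  simp only [← Finset.mul_sum, Finset.sum_sub_distrib, Finset.sum_add_distrib, sum_if_const,
    Finset.sum_ite_eq, Finset.sum_ite_eq', Finset.mem_univ, if_true, Finset.sum_const_zero,
    eq_self_iff_true, Finset.sum_const, Finset.card_univ, Fintype.card_fin, nsmul_eq_mul]
  split_ifs <;> ring

set_option maxHeartbeats 2000000 in
lemma pairsum (N : ℕ) (a1 a2 a3 b1 b2 b3 : Fin N) :
    ∑ x : Fin N, ∑ y : Fin N, ∑ z : Fin N,
        antisymProj6 N a1 a2 a3 x y z * antisymProj6 N z y x b1 b2 b3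
      = - antisymProj6 N a1 a2 a3 b1 b2 b3 := by
  simp only [proj_explicit]
  simp only [mul_sub, sub_mul, mul_add, add_mul]
  simp only [d]
  simp only [ite_mul, mul_ite, zero_mul, mul_zero, one_mul, mul_one]
  simp only [← Finset.mul_sum, Finset.sum_sub_distrib, Finset.sum_add_distrib, sum_if_const,
    Finset.sum_ite_eq, Finset.sum_ite_eq', Finset.mem_univ, if_true, Finset.sum_const_zero,
    eq_self_iff_true, Finset.sum_const, Finset.card_univ, Fintype.card_fin, nsmul_eq_mul]
  split_ifs <;> ring


lemma sum_pi6 {β : Type*} [Fintype β] (f : β → β → β → β → β → β → ℝ) :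
    ∑ c : Fin 6 → β, f (c 0) (c 1) (c 2) (c 3) (c 4) (c 5)
      = ∑ x0 : β, ∑ x1 : β, ∑ x2 : β, ∑ x3 : β, ∑ x4 : β, ∑ x5 : β,
          f x0 x1 x2 x3 x4 x5 := by
  let e : (β × β × β × β × β × β) ≃ (Fin 6 → β) :=
    { toFun := fun p => ![p.1, p.2.1, p.2.2.1, p.2.2.2.1, p.2.2.2.2.1, p.2.2.2.2.2]
      invFun := fun c => (c 0, c 1, c 2, c 3, c 4, c 5)
      left_inv := fun p => rfl
      right_inv := fun c => by funext i; fin_cases i <;> rfl }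
  rw [← e.sum_comp]
  simp [e, Fintype.sum_prod_type, show ∀ (x0 x1 x2 x3 x4 x5 : β), ![x0,x1,x2,x3,x4,x5] 5 = x5 from fun _ _ _ _ _ _ => rfl]
  rfl

end AuxTadpole

lemma proj_zero12 (N : ℕ) (u w b1 b2 b3 : Fin N) :
    antisymProj6 N u u w b1 b2 b3 = 0 := by
  rw [proj_explicit]; ring

lemma proj_zero23 (N : ℕ) (a1 a2 a3 u v : Fin N) :
    antisymProj6 N a1 a2 a3 u v v = 0 := by
  rw [proj_explicit]; ring

set_option maxHeartbeats 1000000 in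
/-- The tadpole contraction of three antisymmetric projectors is `((N-2)/6)` times the
projector itself. -/
theorem antisym_tadpole (N : ℕ) (a1 a2 a3 b1 b2 b3 : Fin N) :
    ∑ c : Fin 6 → Fin N,
        antisymProj6 N a1 a2 a3 (c 0) (c 1) (c 2)
          * antisymProj6 N (c 2) (c 3) (c 4) (c 4) (c 1) (c 5)
          * antisymProj6 N (c 5) (c 3) (c 0) b1 b2 b3
      = (((N : ℝ) - 2) / 6) * antisymProj6 N a1 a2 a3 b1 b2 b3 := by
  rw [sum_pi6 (fun x0 x1 x2 x3 x4 x5 =>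
    antisymProj6 N a1 a2 a3 x0 x1 x2 * antisymProj6 N x2 x3 x4 x4 x1 x5
      * antisymProj6 N x5 x3 x0 b1 b2 b3)]
  have h1 : ∀ x0 x1 x2 x3 : Fin N,
      (∑ x4 : Fin N, ∑ x5 : Fin N,
        antisymProj6 N a1 a2 a3 x0 x1 x2 * antisymProj6 N x2 x3 x4 x4 x1 x5
          * antisymProj6 N x5 x3 x0 b1 b2 b3)
      = ∑ x5 : Fin N, antisymProj6 N a1 a2 a3 x0 x1 x2
          * ((((N:ℝ) - 2)/6) * (d x2 x1 * d x3 x5 - d x2 x5 * d x3 x1))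
          * antisymProj6 N x5 x3 x0 b1 b2 b3 := by
    intro x0 x1 x2 x3
    rw [Finset.sum_comm]
    refine Finset.sum_congr rfl fun x5 _ => ?_
    rw [← Finset.sum_mul, ← Finset.mul_sum, middle]
  simp only [h1]
  simp only [mul_sub, sub_mul, d]
  simp only [ite_mul, mul_ite, zero_mul, mul_zero, one_mul, mul_one]
  simp only [← Finset.mul_sum, Finset.sum_sub_distrib, sum_if_const, Finset.sum_ite_eq,
    Finset.sum_ite_eq', Finset.mem_univ, if_true, Finset.sum_const_zero, proj_zero12,
    proj_zero23, mul_zero, zero_mul]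
  have h2 : ∀ x y z : Fin N,
      antisymProj6 N a1 a2 a3 x y z * (((N:ℝ) - 2) / 6) * antisymProj6 N z y x b1 b2 b3
        = (((N:ℝ) - 2) / 6) * (antisymProj6 N a1 a2 a3 x y z * antisymProj6 N z y x b1 b2 b3) := by
    intros; ring
  simp only [h2, ← Finset.mul_sum, pairsum]
  ring
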